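/- Let p be an odd prime, e ≥ 1, a ∈ p·(Z/p^e Z) with a ≠ 0, b a unit, and y a unit with y ≠ b such that y = φ(x) for some x. Then the number of x ∈ Z/p^e Z with φ(x) = y equals p^{v_p(a)}. -/

import Mathlib

open scoped Classical

/-- Truncated p-adic valuation on `Z/p^e Z`. -/
def vp (p e : ℕ) (y : ZMod (p ^ e)) : ℕ :=
  if y = 0 then e else min (padicValNat p y.val) e

lemma zmod_inv_inv {N : ℕ} (x : ZMod N) (h : IsUnit x) : x⁻¹⁻¹ = x := by
  have h1 := ZMod.inv_mul_of_unit x h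
  have hinv : IsUnit x⁻¹ := IsUnit.of_mul_eq_one _ h1
  have h2 := ZMod.mul_inv_of_unit x⁻¹ hinv
  exact hinv.mul_left_cancel (h2.trans h1.symm)

theorem stmt13 (p : ℕ) (hp : p.Prime) (hp2 : p ≠ 2) (e : ℕ) (he : 1 ≤ e)
    (a b : ZMod (p ^ e)) (hpa : (p : ZMod (p ^ e)) ∣ a) (ha : a ≠ 0)
    (hb : IsUnit b)
    (φ : ZMod (p ^ e) → ZMod (p ^ e))
    (hφ : ∀ x, φ x = if IsUnit x then a * x⁻¹ + b else b)
    (y : ZMod (p ^ e)) (hy : IsUnit y) (hyb : y ≠ b)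
    (him : ∃ x, φ x = y) :
    {x : ZMod (p ^ e) | φ x = y}.ncard = p ^ vp p e a := by
  have hpp : Fact p.Prime := ⟨hp⟩
  have hne : NeZero (p ^ e) := ⟨pow_ne_zero e hp.pos.ne'⟩
  set n := a.val with hn
  have hn0 : n ≠ 0 := fun h => ha (by rw [← ZMod.natCast_zmod_val a, ← hn, h, Nat.cast_zero])
  have hnlt : n < p ^ e := ZMod.val_lt a
  -- p divides n
  have hpn : p ∣ n := by
    obtain ⟨c, hc⟩ := hpa
    have h1 : ((n : ℕ) : ZMod (p ^ e)) = ((p * c.val : ℕ) : ZMod (p ^ e)) := by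
      push_cast
      rw [ZMod.natCast_zmod_val, ZMod.natCast_zmod_val, ← hc]
    have h2 := (ZMod.natCast_eq_natCast_iff _ _ _).1 h1
    have h3 := h2.of_dvd (dvd_pow_self p (by omega : e ≠ 0))
    exact Nat.dvd_of_mod_eq_zero (by simpa [Nat.ModEq, Nat.mul_mod_right] using h3)
  set v := padicValNat p n with hv
  have hv1 : 1 ≤ v := one_le_padicValNat_of_dvd hn0 hpn
  have hve : v < e := by
    by_contra h
    have hd : p ^ e ∣ n := (pow_dvd_pow p (not_lt.1 h)).trans pow_padicValNat_dvd
    exact absurd (Nat.le_of_dvd (Nat.pos_of_ne_zero hn0) hd) (not_le.2 hnlt)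
  have hvp : vp p e a = v := by rw [vp, if_neg ha]; exact min_eq_left hve.le
  -- write n = p^v * m with p ∤ m
  set m := n / p ^ v with hmdef
  have hm : p ^ v * m = n := Nat.mul_div_cancel' pow_padicValNat_dvd
  have hmp : ¬ p ∣ m := by
    intro ⟨s, hs⟩
    have : p ^ (v + 1) ∣ n := ⟨s, by rw [← hm, hs]; ring⟩
    exact pow_succ_padicValNat_not_dvd hn0 this
  -- key divisibility fact
  have key : ∀ t : ℕ, (p ^ e ∣ n * t ↔ p ^ (e - v) ∣ t) := by
    intro t
    have hco : Nat.Coprime (p ^ (e - v)) m :=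
      Nat.Coprime.pow_left _ ((Nat.Prime.coprime_iff_not_dvd hp).2 hmp)
    constructor
    · intro hdvd
      have h2 : p ^ v * p ^ (e - v) ∣ p ^ v * (m * t) := by
        rw [← pow_add, show v + (e - v) = e by omega, ← mul_assoc, hm]
        exact hdvd
      have h3 : p ^ (e - v) ∣ m * t :=
        (mul_dvd_mul_iff_left (a := (p : ℕ) ^ v) (pow_ne_zero _ hp.pos.ne')).1 h2
      exact hco.dvd_of_dvd_mul_left h3
    · rintro ⟨s, rfl⟩
      exact ⟨m * s, by rw [← hm, ← pow_sub_mul_pow p hve.le]; ring⟩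
  -- multiplication characterization
  have hmul : ∀ t : ZMod (p ^ e), (a * t = 0 ↔ p ^ (e - v) ∣ t.val) := by
    intro t
    have h1 : a * t = ((n * t.val : ℕ) : ZMod (p ^ e)) := by
      push_cast
      rw [ZMod.natCast_zmod_val, ZMod.natCast_zmod_val]
    rw [h1, ZMod.natCast_eq_zero_iff, key]
  -- unit criterion
  have unit_iff : ∀ x : ZMod (p ^ e), IsUnit x ↔ ¬ p ∣ x.val := by
    intro x
    conv_lhs => rw [← ZMod.natCast_zmod_val x]
    rw [ZMod.isUnit_iff_coprime, Nat.coprime_pow_right_iff (by omega), Nat.coprime_comm,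
      hp.coprime_iff_not_dvd]
  -- unit of sum
  have hunit_sum : ∀ u t : ZMod (p ^ e), IsUnit u → p ^ (e - v) ∣ t.val → IsUnit (u + t) := by
    intro u t hu ht
    rw [unit_iff] at hu ⊢
    intro hdvd
    apply hu
    have htp : p ∣ t.val := (dvd_pow_self p (by omega : e - v ≠ 0)).trans ht
    have hval : (u + t).val ≡ u.val + t.val [MOD p ^ e] :=
      (ZMod.natCast_eq_natCast_iff _ _ _).1 (by
        push_cast
        rw [ZMod.natCast_zmod_val, ZMod.natCast_zmod_val, ZMod.natCast_zmod_val])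
    have := (hval.of_dvd (dvd_pow_self p (by omega : e ≠ 0))).symm.trans
      (Nat.modEq_zero_iff_dvd.2 hdvd)
    have h0 : p ∣ u.val + t.val := Nat.modEq_zero_iff_dvd.1 this
    exact (Nat.dvd_add_right htp).1 (by rwa [add_comm] at h0)
  -- get a base point
  obtain ⟨x₀, hx₀⟩ := him
  have hx₀u : IsUnit x₀ := by
    by_contra h
    rw [hφ, if_neg h] at hx₀
    exact hyb hx₀.symm
  rw [hφ, if_pos hx₀u] at hx₀
  set u₀ := x₀⁻¹ with hu₀def
  have hu₀ : IsUnit u₀ := IsUnit.of_mul_eq_one _ (ZMod.inv_mul_of_unit x₀ hx₀u)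
  have hc : a * u₀ = y - b := by rw [← hx₀]; ring
  -- set equality
  have hSeq : {x : ZMod (p ^ e) | φ x = y}
      = (fun t => (u₀ + t)⁻¹) '' {t : ZMod (p ^ e) | a * t = 0} := by
    ext x
    simp only [Set.mem_setOf_eq, Set.mem_image]
    constructor
    · intro hx
      have hxu : IsUnit x := by
        by_contra h
        rw [hφ, if_neg h] at hx
        exact hyb hx.symm
      rw [hφ, if_pos hxu] at hx
      refine ⟨x⁻¹ - u₀, ?_, ?_⟩
      · have hax : a * x⁻¹ = y - b := by rw [← hx]; ring
        rw [mul_sub, hax, hc, sub_self]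
      · rw [add_sub_cancel, zmod_inv_inv x hxu]
    · rintro ⟨t, ht, rfl⟩
      have htv := (hmul t).1 ht
      have hu := hunit_sum u₀ t hu₀ htv
      have huinv : IsUnit (u₀ + t)⁻¹ := IsUnit.of_mul_eq_one _ (ZMod.inv_mul_of_unit _ hu)
      rw [hφ, if_pos huinv, zmod_inv_inv _ hu, mul_add, hc, ht, add_zero, sub_add_cancel]
  have hinjOn : Set.InjOn (fun t => (u₀ + t)⁻¹) {t : ZMod (p ^ e) | a * t = 0} := by
    intro t ht s hs h
    have hut := hunit_sum u₀ t hu₀ ((hmul t).1 ht)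
    have hus := hunit_sum u₀ s hu₀ ((hmul s).1 hs)
    have : u₀ + t = u₀ + s := by
      rw [← zmod_inv_inv _ hut, ← zmod_inv_inv _ hus]
      simpa using congrArg (·⁻¹) h
    exact add_left_cancel this
  rw [hSeq, Set.ncard_image_of_injOn hinjOn, hvp]
  -- now count the annihilator
  have hpv : NeZero (p ^ v) := ⟨pow_ne_zero _ hp.pos.ne'⟩
  set f : ZMod (p ^ v) → ZMod (p ^ e) := fun k => ((p ^ (e - v) * k.val : ℕ) : ZMod (p ^ e))
    with hf
  have hpe : p ^ (e - v) * p ^ v = p ^ e := by rw [← pow_add]; congr 1; omega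
  have hflt : ∀ k : ZMod (p ^ v), p ^ (e - v) * k.val < p ^ e := by
    intro k
    calc p ^ (e - v) * k.val < p ^ (e - v) * p ^ v :=
          (Nat.mul_lt_mul_left (pow_pos hp.pos _)).2 (ZMod.val_lt k)
      _ = p ^ e := hpe
  have hA : {t : ZMod (p ^ e) | a * t = 0} = Set.range f := by
    ext t
    simp only [Set.mem_setOf_eq, hmul, Set.mem_range]
    constructor
    · rintro ⟨k, hk⟩
      have hklt : k < p ^ v := by
        have h1 : p ^ (e - v) * k < p ^ (e - v) * p ^ v := by
          rw [hpe, ← hk]; exact ZMod.val_lt t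
        exact Nat.lt_of_mul_lt_mul_left h1
      refine ⟨(k : ZMod (p ^ v)), ?_⟩
      rw [hf]
      simp only
      rw [ZMod.val_cast_of_lt hklt, ← hk, ZMod.natCast_zmod_val]
    · rintro ⟨k, rfl⟩
      rw [hf]
      simp only
      rw [ZMod.val_cast_of_lt (hflt k)]
      exact ⟨k.val, rfl⟩
  have hfinj : Function.Injective f := by
    intro k l h
    rw [hf] at h
    simp only at h
    have hv1' := ZMod.val_cast_of_lt (n := p ^ e) (hflt k)
    have hv2' := ZMod.val_cast_of_lt (n := p ^ e) (hflt l)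
    have h2 : p ^ (e - v) * k.val = p ^ (e - v) * l.val := by
      rw [← hv1', ← hv2', h]
    have h3 : k.val = l.val := Nat.eq_of_mul_eq_mul_left (pow_pos hp.pos _) h2
    rw [← ZMod.natCast_zmod_val k, ← ZMod.natCast_zmod_val l, h3]
  rw [hA, ← Nat.card_coe_set_eq, Nat.card_range_of_injective hfinj, Nat.card_zmod]
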